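/- For every integer n ≥ 1 and every x ∈ [0,1], the two expressions for the winning probability of the x-strategy agree: Σ_{k=0}^{n-1} C(n,k) x^k (1-x)^{n-k} s(k+1,n) = 1 - x - Σ_{k=2}^{n} (1-x)^k/(k(k-1)). -/

import Mathlib

open Finset Real

/-- `h(d,n) = Σ_{j=d}^{n} 1/(j-1)` -/
noncomputable def hfun (d n : ℕ) : ℝ := ∑ j ∈ Finset.Icc d n, 1 / ((j : ℝ) - 1)

/-- `s(1,n) = 1/n` and `s(d,n) = ((d-1)/n)·h(d,n)` for `d ≥ 2`. -/
noncomputable def sfun (d n : ℕ) : ℝ :=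
  if d = 1 then 1 / (n : ℝ) else ((d : ℝ) - 1) / (n : ℝ) * hfun d n

noncomputable def Hh (j : ℕ) : ℝ := ∑ i ∈ Finset.Icc 1 j, 1 / (i : ℝ)

lemma Hh_zero : Hh 0 = 0 := by simp [Hh]

lemma Hh_succ (j : ℕ) : Hh (j+1) = Hh j + 1 / ((j:ℝ)+1) := by
  rw [Hh, Hh, Finset.sum_Icc_succ_top (by omega)]
  push_cast; ring

lemma hfun_eq (i m : ℕ) (h : i ≤ m) : hfun (i+2) (m+1) = Hh m - Hh i := by
  have h1 : hfun (i+2) (m+1) = ∑ j ∈ Finset.Icc (i+1) m, 1 / (j : ℝ) := by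
    rw [hfun, show i+2 = (i+1)+1 from rfl, ← Finset.map_add_right_Icc (i+1) m 1]
    rw [Finset.sum_map]
    simp [addRightEmbedding]
  rw [h1]
  have h2 : (∑ j ∈ Finset.Icc 1 i, 1 / (j:ℝ)) + ∑ j ∈ Finset.Icc (i+1) m, 1 / (j : ℝ)
      = ∑ j ∈ Finset.Icc 1 m, 1 / (j:ℝ) := by
    rw [Finset.Icc_add_one_left_eq_Ioc i m, ← zero_add 1, Finset.Icc_add_one_left_eq_Ioc 0 i, Finset.Icc_add_one_left_eq_Ioc 0 m]
    exact Finset.sum_Ioc_consecutive _ (Nat.zero_le i) h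
  rw [Hh, Hh, ← h2]; ring

lemma binom_aux (m : ℕ) (x : ℝ) :
    ∑ i ∈ Finset.range (m+1), (m.choose i : ℝ) * x^(i+1) * (1-x)^(m-i) / ((i:ℝ)+1)
      = (1 - (1-x)^(m+1)) / ((m:ℝ)+1) := by
  have hm : ((m:ℝ)+1) ≠ 0 := by positivity
  rw [eq_div_iff hm]
  have key : ∀ i : ℕ, ((m.choose i : ℝ)) * ((m:ℝ)+1) = ((m+1).choose (i+1) : ℝ) * ((i:ℝ)+1) := by
    intro i
    have h := Nat.add_one_mul_choose_eq m i
    have h2 : (((m+1) * m.choose i : ℕ) : ℝ) = (((m+1).choose (i+1) * (i+1) : ℕ) : ℝ) := by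
      exact_mod_cast congrArg (Nat.cast : ℕ → ℝ) h
    push_cast at h2
    linarith [h2]
  calc (∑ i ∈ Finset.range (m+1), (m.choose i : ℝ) * x^(i+1) * (1-x)^(m-i) / ((i:ℝ)+1)) * ((m:ℝ)+1)
      = ∑ i ∈ Finset.range (m+1), ((m+1).choose (i+1) : ℝ) * x^(i+1) * (1-x)^((m+1)-(i+1)) := by
        rw [Finset.sum_mul]
        apply Finset.sum_congr rfl
        intro i hi
        have hi' : i ≤ m := by simpa [Nat.lt_succ_iff] using hi
        have : m + 1 - (i+1) = m - i := by omega
        rw [this]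
        have hki := key i
        have hii : ((i:ℝ)+1) ≠ 0 := by positivity
        field_simp
        linear_combination (x^(i+1) * (1-x)^(m-i)) * hki
    _ = (∑ j ∈ Finset.range (m+2), ((m+1).choose j : ℝ) * x^j * (1-x)^((m+1)-j)) - (1-x)^(m+1) := by
        rw [Finset.sum_range_succ' (fun j => ((m+1).choose j : ℝ) * x^j * (1-x)^((m+1)-j)) (m+1)]
        simp
    _ = 1 - (1-x)^(m+1) := by
        have hb := add_pow x (1-x) (m+1)
        simp only [add_sub_cancel, one_pow] at hb
        have : (1:ℝ) = ∑ j ∈ Finset.range (m+2), x^j * (1-x)^((m+1)-j) * ((m+1).choose j : ℝ) := hb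
        rw [show (1:ℝ) - (1-x)^(m+1) = (∑ j ∈ Finset.range (m+2), x^j * (1-x)^((m+1)-j) * ((m+1).choose j : ℝ)) - (1-x)^(m+1) from by rw [← this]]
        congr 1
        apply Finset.sum_congr rfl
        intro j _
        ring

lemma keyid (m : ℕ) (x : ℝ) :
    ∑ j ∈ Finset.range (m+1), (m.choose j : ℝ) * x^j * (1-x)^(m-j) * Hh j
      = ∑ k ∈ Finset.Icc 1 m, (1 - (1-x)^k) / (k:ℝ) := by
  induction m with
  | zero => simp [Hh_zero]
  | succ m ih =>
    rw [Finset.sum_range_succ' (fun j => (((m+1).choose j : ℝ)) * x^j * (1-x)^(m+1-j) * Hh j) (m+1)]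
    simp only [Hh_zero, mul_zero, add_zero]
    have hstep : ∀ i ∈ Finset.range (m+1),
        ((m+1).choose (i+1) : ℝ) * x^(i+1) * (1-x)^(m+1-(i+1)) * Hh (i+1)
          = x * ((m.choose i : ℝ) * x^i * (1-x)^(m-i) * Hh i)
            + (m.choose i : ℝ) * x^(i+1) * (1-x)^(m-i) / ((i:ℝ)+1)
            + (m.choose (i+1) : ℝ) * x^(i+1) * (1-x)^(m+1-(i+1)) * Hh (i+1) := by
      intro i hi
      have hi' : i ≤ m := by simpa [Nat.lt_succ_iff] using hi
      have h1 : m + 1 - (i+1) = m - i := by omega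
      rw [h1, Nat.choose_succ_succ, Hh_succ]
      push_cast
      ring
    rw [Finset.sum_congr rfl hstep, Finset.sum_add_distrib, Finset.sum_add_distrib,
        ← Finset.mul_sum, binom_aux]
    have h3 : (∑ i ∈ Finset.range (m+1), (m.choose (i+1) : ℝ) * x^(i+1) * (1-x)^(m+1-(i+1)) * Hh (i+1))
        = (1-x) * ∑ j ∈ Finset.range (m+1), (m.choose j : ℝ) * x^j * (1-x)^(m-j) * Hh j := by
      have e1 := Finset.sum_range_succ' (fun j => ((m.choose j : ℝ)) * x^j * (1-x)^(m+1-j) * Hh j) (m+1)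
      have e2 := Finset.sum_range_succ (fun j => ((m.choose j : ℝ)) * x^j * (1-x)^(m+1-j) * Hh j) (m+1)
      simp only [Hh_zero, mul_zero, add_zero, Nat.choose_succ_self, Nat.cast_zero, zero_mul] at e1 e2
      rw [e2] at e1
      rw [← e1, Finset.mul_sum]
      apply Finset.sum_congr rfl
      intro j hj
      have hj' : j ≤ m := by simpa [Nat.lt_succ_iff] using hj
      rw [show m + 1 - j = (m-j)+1 from by omega, pow_succ]
      ring
    rw [h3, ih, Finset.sum_Icc_succ_top (by omega : 1 ≤ m+1)]
    push_cast
    ring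

lemma final (m : ℕ) (x : ℝ) :
    (1-x)^(m+1)/((m:ℝ)+1) + x * ∑ k ∈ Finset.Icc 1 m, (1-x)^k / (k:ℝ)
      = 1 - x - ∑ k ∈ Finset.Icc 2 (m+1), (1-x)^k / ((k:ℝ) * ((k:ℝ)-1)) := by
  induction m with
  | zero => norm_num
  | succ m ih =>
    rw [Finset.sum_Icc_succ_top (by omega : 1 ≤ m+1), Finset.sum_Icc_succ_top (by omega : 2 ≤ m+1+1)]
    have h1 : ((m:ℝ)+1) ≠ 0 := by positivity
    have h2 : ((m:ℝ)+2) ≠ 0 := by positivity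
    push_cast
    have key : (1-x)^(m+1+1)/((m:ℝ)+1+1) - (1-x)^(m+1)/((m:ℝ)+1) + x * ((1-x)^(m+1)/((m:ℝ)+1))
        = -((1-x)^(m+1+1) / (((m:ℝ)+1+1) * (((m:ℝ)+1+1)-1))) := by
      rw [pow_succ]
      field_simp
      ring
    linarith [ih, key]

/-- The two expressions for the winning probability of the `x`-strategy agree. -/
theorem stmt0 (n : ℕ) (hn : 1 ≤ n) (x : ℝ) (hx : x ∈ Set.Icc (0:ℝ) 1) :
    ∑ k ∈ Finset.range n, (n.choose k : ℝ) * x ^ k * (1 - x) ^ (n - k) * sfun (k + 1) n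
      = 1 - x - ∑ k ∈ Finset.Icc 2 n, (1 - x) ^ k / ((k : ℝ) * ((k : ℝ) - 1)) := by
  obtain ⟨m, rfl⟩ : ∃ m, n = m + 1 := ⟨n - 1, by omega⟩
  rw [Finset.sum_range_succ' (fun k => (((m+1).choose k : ℝ)) * x^k * (1-x)^(m+1-k) * sfun (k+1) (m+1)) m]
  have hf0 : ((m+1).choose 0 : ℝ) * x^0 * (1-x)^(m+1-0) * sfun (0+1) (m+1)
      = (1-x)^(m+1) / ((m:ℝ)+1) := by
    simp [sfun]
    push_cast
    ring
  have hstep : ∀ i ∈ Finset.range m,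
      ((m+1).choose (i+1) : ℝ) * x^(i+1) * (1-x)^(m+1-(i+1)) * sfun (i+1+1) (m+1)
        = x * ((m.choose i : ℝ) * x^i * (1-x)^(m-i) * (Hh m - Hh i)) := by
    intro i hi
    have hi' : i ≤ m := le_of_lt (Finset.mem_range.mp hi)
    have h1 : m + 1 - (i+1) = m - i := by omega
    have h2 : sfun (i+1+1) (m+1) = ((i:ℝ)+1)/((m:ℝ)+1) * (Hh m - Hh i) := by
      rw [sfun, if_neg (by omega : ¬ i+1+1 = 1), show i+1+1 = i+2 from rfl, hfun_eq i m hi']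
      push_cast; ring
    rw [h1, h2]
    have h := Nat.add_one_mul_choose_eq m i
    have h4 : (((m+1) * m.choose i : ℕ) : ℝ) = (((m+1).choose (i+1) * (i+1) : ℕ) : ℝ) := by
      exact_mod_cast congrArg (Nat.cast : ℕ → ℝ) h
    push_cast at h4
    have hm : ((m:ℝ)+1) ≠ 0 := by positivity
    have h5 : ((m+1).choose (i+1) : ℝ) * (((i:ℝ)+1)/((m:ℝ)+1)) = (m.choose i : ℝ) := by
      field_simp
      linarith [h4]
    linear_combination (x^(i+1) * (1-x)^(m-i) * (Hh m - Hh i)) * h5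
  rw [Finset.sum_congr rfl hstep, hf0]
  have hext := Finset.sum_range_succ (fun i => x * ((m.choose i : ℝ) * x^i * (1-x)^(m-i) * (Hh m - Hh i))) m
  have hlast : x * ((m.choose m : ℝ) * x^m * (1-x)^(m-m) * (Hh m - Hh m)) = 0 := by simp
  rw [hlast, add_zero] at hext
  rw [← hext]
  have hb : ∑ j ∈ Finset.range (m+1), (m.choose j : ℝ) * x^j * (1-x)^(m-j) = 1 := by
    have hb0 := add_pow x (1-x) m
    rw [show x + (1-x) = 1 from by ring, one_pow] at hb0
    calc ∑ j ∈ Finset.range (m+1), (m.choose j : ℝ) * x^j * (1-x)^(m-j)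
        = ∑ j ∈ Finset.range (m+1), x^j * (1-x)^(m-j) * (m.choose j : ℝ) := by
          apply Finset.sum_congr rfl; intro j _; ring
      _ = 1 := hb0.symm
  have hsplit : (∑ i ∈ Finset.range (m+1), x * ((m.choose i : ℝ) * x^i * (1-x)^(m-i) * (Hh m - Hh i)))
      = x * Hh m * (∑ i ∈ Finset.range (m+1), (m.choose i : ℝ) * x^i * (1-x)^(m-i))
        - x * (∑ i ∈ Finset.range (m+1), (m.choose i : ℝ) * x^i * (1-x)^(m-i) * Hh i) := by
    rw [Finset.mul_sum, Finset.mul_sum, ← Finset.sum_sub_distrib]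
    apply Finset.sum_congr rfl
    intro i _; ring
  rw [hsplit, hb, keyid, mul_one]
  have hc : x * Hh m - x * (∑ k ∈ Finset.Icc 1 m, (1 - (1-x)^k) / (k:ℝ))
      = x * ∑ k ∈ Finset.Icc 1 m, (1-x)^k / (k:ℝ) := by
    rw [Hh, Finset.mul_sum, Finset.mul_sum, Finset.mul_sum, ← Finset.sum_sub_distrib]
    apply Finset.sum_congr rfl
    intro k hk
    have hk1 : 1 ≤ k := (Finset.mem_Icc.mp hk).1
    have hk0 : (k:ℝ) ≠ 0 := by positivity
    field_simp
    ring
  have hfin := final m x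
  push_cast
  linarith [hfin, hc]
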